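/- arXiv:2311.18305 — 3 statements merged into one kernel-verified Lean document; each statement's English description precedes it below -/
import Mathlib

section
/- For every x ∈ ℝ^n, letting x* be the unique point with A x* = b and x* ∈ x + R(Aᵀ), either P(x) = x or ‖P(x) − x*‖² < ‖x − x*‖². -/
open scoped RealInnerProductSpace

noncomputable section

abbrev Euc (n : ℕ) := EuclideanSpace ℝ (Fin n)

/-- Intermediate Kaczmarz chain: `chainK Pj x j` is `y_j` with `y_0 = x`, `y_{j+1} = P_{j+1}(y_j)`. -/
def chainK {n p : ℕ} (Pj : Fin p → Euc n → Euc n) (x : Euc n) : ℕ → Euc n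
  | 0 => x
  | j + 1 => if h : j < p then Pj ⟨j, h⟩ (chainK Pj x j) else chainK Pj x j

/-- The block Kaczmarz operator `P = P_p ∘ ⋯ ∘ P_1`. -/
def kacz {n p : ℕ} (Pj : Fin p → Euc n → Euc n) (x : Euc n) : Euc n := chainK Pj x p

/-- `f` sends each point to the (unique) nearest point of `S`. -/
def IsNearestPointMap {n : ℕ} (S : Set (Euc n)) (f : Euc n → Euc n) : Prop :=
  ∀ x, f x ∈ S ∧ ∀ y ∈ S, dist x (f x) ≤ dist x y

/-- The stacked (full) matrix `A` with blocks `A_j`. -/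
def fullA {n p : ℕ} (m : Fin p → ℕ)
    (A : ∀ j : Fin p, Euc n →ₗ[ℝ] Euc (m j)) :
    Euc n →ₗ[ℝ] PiLp 2 (fun j => Euc (m j)) :=
  (WithLp.linearEquiv 2 ℝ (∀ j, Euc (m j))).symm.toLinearMap ∘ₗ LinearMap.pi A

/-- The range of `Aᵀ` for the stacked matrix. -/
def RAT {n p : ℕ} (m : Fin p → ℕ)
    (A : ∀ j : Fin p, Euc n →ₗ[ℝ] Euc (m j)) : Submodule ℝ (Euc n) :=
  LinearMap.range (LinearMap.adjoint (fullA m A))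

/-- Orthogonal projection onto a subspace, as an endomorphism. -/
def projSub {n : ℕ} (K : Submodule ℝ (Euc n)) : Euc n →ₗ[ℝ] Euc n :=
  K.subtype ∘ₗ (K.orthogonalProjection).toLinearMap

/-- `Tchain m A j = Q_j ∘ ⋯ ∘ Q_1`, with `Q_i` the orthogonal projection onto `N(A_i)`. -/
def Tchain {n p : ℕ} (m : Fin p → ℕ)
    (A : ∀ j : Fin p, Euc n →ₗ[ℝ] Euc (m j)) :
    ℕ → (Euc n →ₗ[ℝ] Euc n)
  | 0 => LinearMap.id
  | j + 1 => if h : j < p then projSub (LinearMap.ker (A ⟨j, h⟩)) ∘ₗ Tchain m A j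
             else Tchain m A j

/-- `T = Q_p ∘ ⋯ ∘ Q_1`. -/
def Tmap {n p : ℕ} (m : Fin p → ℕ)
    (A : ∀ j : Fin p, Euc n →ₗ[ℝ] Euc (m j)) : Euc n →ₗ[ℝ] Euc n :=
  Tchain m A p

/-- `C = I - T`. -/
def Cmap {n p : ℕ} (m : Fin p → ℕ)
    (A : ∀ j : Fin p, Euc n →ₗ[ℝ] Euc (m j)) : Euc n →ₗ[ℝ] Euc n :=
  LinearMap.id - Tmap m A

/-- The Krylov space `K_k(C, r) = span(r, Cr, …, C^{k-1} r)`. -/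
def krylov {n : ℕ} (C : Euc n →ₗ[ℝ] Euc n) (r : Euc n) (k : ℕ) : Submodule ℝ (Euc n) :=
  Submodule.span ℝ {v | ∃ i < k, v = (C ^ i) r}

/-- `z` is the unique minimizer of `‖x - xs‖²` over `S`. -/
def IsUniqueMinimizer {n : ℕ} (xs : Euc n) (S : Set (Euc n)) (z : Euc n) : Prop :=
  z ∈ S ∧ ∀ y ∈ S, y ≠ z → ‖z - xs‖ ^ 2 < ‖y - xs‖ ^ 2

/-- The affine Krylov space `x₀ + K_k(C, r)` as a set. -/
def affKrylov {n : ℕ} (x0 : Euc n) (C : Euc n →ₗ[ℝ] Euc n) (r : Euc n) (k : ℕ) :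
    Set (Euc n) :=
  (fun v => x0 + v) '' (krylov C r k : Set (Euc n))

lemma key {n m : ℕ} (A : Euc n →ₗ[ℝ] Euc m) (b : Euc m)
    (f : Euc n → Euc n) (hf : IsNearestPointMap {z : Euc n | A z = b} f)
    (xs : Euc n) (hxs : A xs = b) (y : Euc n) :
    ‖f y - xs‖ ^ 2 + ‖y - f y‖ ^ 2 = ‖y - xs‖ ^ 2 := by
  have hmem : A (f y) = b := (hf y).1
  have horth : ∀ z : Euc n, A z = b → ⟪y - f y, z - f y⟫ = 0 := by
    intro z hz
    set c : ℝ := ⟪y - f y, z - f y⟫ with hc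
    have hkey : ∀ t : ℝ, 2 * t * c ≤ t ^ 2 * ‖z - f y‖ ^ 2 := by
      intro t
      have hmem' : A (f y + t • (z - f y)) = b := by
        rw [map_add, map_smul, map_sub, hmem, hz]; simp
      have hd := (hf y).2 _ hmem'
      rw [dist_eq_norm, dist_eq_norm] at hd
      have h2 : ‖y - f y‖ ^ 2 ≤ ‖y - (f y + t • (z - f y))‖ ^ 2 :=
        pow_le_pow_left₀ (norm_nonneg _) hd 2
      have hexp : y - (f y + t • (z - f y)) = (y - f y) - t • (z - f y) := by abel
      have hexp2 : ‖(y - f y) - t • (z - f y)‖ ^ 2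
          = ‖y - f y‖ ^ 2 - 2 * (t * c) + t ^ 2 * ‖z - f y‖ ^ 2 := by
        rw [norm_sub_sq_real, real_inner_smul_right, norm_smul]
        simp only [Real.norm_eq_abs, mul_pow, sq_abs]
        rw [← hc]
      rw [hexp, hexp2] at h2
      linarith
    rcases eq_or_ne (‖z - f y‖ ^ 2) 0 with hq | hq
    · have hz0 : z - f y = 0 := by
        have := pow_eq_zero_iff (two_ne_zero) |>.mp hq
        exact norm_eq_zero.mp this
      rw [hc, hz0, inner_zero_right]
    · have hqpos : 0 < ‖z - f y‖ ^ 2 := lt_of_le_of_ne (sq_nonneg _) (Ne.symm hq)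
      have h1 := hkey (c / ‖z - f y‖ ^ 2)
      have hq2 : (c / ‖z - f y‖ ^ 2) ^ 2 * ‖z - f y‖ ^ 2 = c ^ 2 / ‖z - f y‖ ^ 2 := by
        field_simp
      have hl : 2 * (c / ‖z - f y‖ ^ 2) * c = 2 * (c ^ 2 / ‖z - f y‖ ^ 2) := by ring
      rw [hq2, hl] at h1
      have hdiv : c ^ 2 / ‖z - f y‖ ^ 2 ≤ 0 := by linarith
      rcases div_nonpos_iff.mp hdiv with ⟨_, hb⟩ | ⟨ha, _⟩
      · linarith
      · nlinarith [sq_nonneg c]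
  have h0 : ⟪y - f y, xs - f y⟫ = 0 := horth xs hxs
  have hdecomp : y - xs = (y - f y) + (f y - xs) := by abel
  rw [hdecomp, norm_add_sq_real]
  have hz : ⟪y - f y, f y - xs⟫ = 0 := by
    have he : f y - xs = -(xs - f y) := by abel
    rw [he, inner_neg_right, h0]; ring
  rw [hz]; ring

theorem stmt3
    {n p : ℕ} (msz : Fin p → ℕ)
    (A : ∀ j : Fin p, Euc n →ₗ[ℝ] Euc (msz j))
    (b : ∀ j : Fin p, Euc (msz j))
    (hcons : ∃ z : Euc n, ∀ j, A j z = b j)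
    (Pj : Fin p → Euc n → Euc n)
    (hPj : ∀ j : Fin p, IsNearestPointMap {z : Euc n | A j z = b j} (Pj j))
    (x xs : Euc n) (hxs : ∀ j, A j xs = b j) (hxs' : xs - x ∈ RAT msz A) :
    kacz Pj x = x ∨ ‖kacz Pj x - xs‖ ^ 2 < ‖x - xs‖ ^ 2 := by
  have main : ∀ k : ℕ, chainK Pj x k = x ∨ ‖chainK Pj x k - xs‖ ^ 2 < ‖x - xs‖ ^ 2 := by
    intro k
    induction k with
    | zero => left; rfl
    | succ j ih =>
      by_cases h : j < p
      · rw [chainK, dif_pos h]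
        set y := chainK Pj x j with hy
        have hk := key (A ⟨j, h⟩) (b ⟨j, h⟩) (Pj ⟨j, h⟩) (hPj ⟨j, h⟩) xs (hxs ⟨j, h⟩) y
        rcases eq_or_ne (Pj ⟨j, h⟩ y) y with he | hne
        · rw [he]; exact ih
        · have hpos : 0 < ‖y - Pj ⟨j, h⟩ y‖ ^ 2 := by
            have hne' : y - Pj ⟨j, h⟩ y ≠ 0 := sub_ne_zero.mpr (Ne.symm hne)
            exact pow_pos (norm_pos_iff.mpr hne') 2
          right
          rcases ih with he2 | hlt
          · rw [he2] at hk hpos ⊢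
            linarith
          · linarith
      · rw [chainK, dif_neg h]; exact ih
  exact main p

end
end

section
/- Fix x_0 ∈ ℝ^n and let x* be the unique point with A x* = b and x* ∈ x_0 + R(Aᵀ). Then for every x ∈ x_0 + R(Aᵀ), setting y_0 := x and y_j := P_j(y_{j−1}) for j = 1,…,p, one has Σ_{j=1}^p ‖y_j − y_{j−1}‖² + ‖P(x) − x‖² = 2⟨x* − x, P(x) − x⟩, where ⟨·,·⟩ is the Euclidean inner product. -/
open scoped RealInnerProductSpace

noncomputable section

lemma orth_aux {n m : ℕ} (A : Euc n →ₗ[ℝ] Euc m) (b : Euc m) (f : Euc n → Euc n)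
    (hf : IsNearestPointMap {z : Euc n | A z = b} f) (x h : Euc n) (hh : A h = b) :
    ⟪x - f x, h - f x⟫ = 0 := by
  obtain ⟨hfx, hmin⟩ := hf x
  set c : ℝ := ⟪x - f x, h - f x⟫ with hc
  set N : ℝ := ‖h - f x‖ ^ 2 with hN
  set t : ℝ := c / (N + 1) with ht
  have hmem : f x + t • (h - f x) ∈ {z : Euc n | A z = b} := by
    simp only [Set.mem_setOf_eq, map_add, map_smul]
    rw [show A (f x) = b from hfx, map_sub, hh, show A (f x) = b from hfx]
    simp
  have hle := hmin _ hmem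
  rw [dist_eq_norm, dist_eq_norm] at hle
  have hsq : ‖x - f x‖ ^ 2 ≤ ‖x - (f x + t • (h - f x))‖ ^ 2 := by
    have := norm_nonneg (x - f x)
    nlinarith [norm_nonneg (x - (f x + t • (h - f x)))]
  have hexp : ‖x - (f x + t • (h - f x))‖ ^ 2
      = ‖x - f x‖ ^ 2 - 2 * t * c + t ^ 2 * N := by
    have h1 : x - (f x + t • (h - f x)) = (x - f x) - t • (h - f x) := by abel
    rw [h1, norm_sub_sq_real, real_inner_smul_right, norm_smul]
    simp [mul_pow, hc, hN]
    ring
  have hNnn : (0:ℝ) ≤ N := by positivity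
  rw [hexp] at hsq
  have key : 2 * t * c ≤ t ^ 2 * N := by linarith
  rw [ht] at key
  have hpos : (0:ℝ) < N + 1 := by linarith
  have : c ^ 2 * (N + 2) ≤ 0 := by
    have h2 := key
    rw [div_pow] at h2
    have h3 : 2 * (c / (N+1)) * c * (N+1)^2 ≤ c^2 / (N+1)^2 * N * (N+1)^2 := by
      apply mul_le_mul_of_nonneg_right h2 (by positivity)
    have h4 : 2 * c^2 * (N+1) ≤ c^2 * N := by
      field_simp at h3
      have e : 2 * c * c * (N + 1) ^ 2 / (N + 1) = 2 * c ^ 2 * (N + 1) := by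
        field_simp
      linarith [e ▸ h3]
    nlinarith
  nlinarith [sq_nonneg c]

theorem stmt6
    {n p : ℕ} (msz : Fin p → ℕ)
    (A : ∀ j : Fin p, Euc n →ₗ[ℝ] Euc (msz j))
    (b : ∀ j : Fin p, Euc (msz j))
    (hcons : ∃ z : Euc n, ∀ j, A j z = b j)
    (Pj : Fin p → Euc n → Euc n)
    (hPj : ∀ j : Fin p, IsNearestPointMap {z : Euc n | A j z = b j} (Pj j))
    (x0 xs : Euc n) (hxs : ∀ j, A j xs = b j) (hxs' : xs - x0 ∈ RAT msz A)
    (x : Euc n) (hx : x - x0 ∈ RAT msz A) :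
    (∑ j ∈ Finset.range p, ‖chainK Pj x (j + 1) - chainK Pj x j‖ ^ 2)
        + ‖kacz Pj x - x‖ ^ 2 =
      2 * ⟪xs - x, kacz Pj x - x⟫ := by
  have key : ∀ k ≤ p,
      (∑ j ∈ Finset.range k, ‖chainK Pj x (j + 1) - chainK Pj x j‖ ^ 2)
        + ‖xs - chainK Pj x k‖ ^ 2 = ‖xs - x‖ ^ 2 := by
    intro k hk
    induction k with
    | zero => simp [chainK]
    | succ k ih =>
      have hkp : k < p := hk
      have ih' := ih (le_of_lt hkp)
      have hstep : chainK Pj x (k + 1) = Pj ⟨k, hkp⟩ (chainK Pj x k) := by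
        rw [chainK, dif_pos hkp]
      have horh : ⟪chainK Pj x k - chainK Pj x (k+1), xs - chainK Pj x (k+1)⟫ = 0 := by
        rw [hstep]
        exact orth_aux (A ⟨k, hkp⟩) (b ⟨k, hkp⟩) (Pj ⟨k, hkp⟩) (hPj ⟨k, hkp⟩)
          (chainK Pj x k) xs (hxs ⟨k, hkp⟩)
      have hpyth : ‖xs - chainK Pj x k‖ ^ 2
          = ‖xs - chainK Pj x (k+1)‖ ^ 2 + ‖chainK Pj x (k+1) - chainK Pj x k‖ ^ 2 := by
        have hdec : xs - chainK Pj x k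
            = (xs - chainK Pj x (k+1)) + (chainK Pj x (k+1) - chainK Pj x k) := by abel
        rw [hdec, norm_add_sq_real]
        have hz : ⟪xs - chainK Pj x (k+1), chainK Pj x (k+1) - chainK Pj x k⟫ = 0 := by
          rw [real_inner_comm] at horh
          have : chainK Pj x (k+1) - chainK Pj x k
              = -(chainK Pj x k - chainK Pj x (k+1)) := by abel
          rw [this, inner_neg_right, horh, neg_zero]
        rw [hz]; ring
      rw [Finset.sum_range_succ]
      linarith
  have hfin := key p le_rfl
  have hk : kacz Pj x = chainK Pj x p := rfl
  have hpol : ‖(xs - x) - (kacz Pj x - x)‖ ^ 2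
      = ‖xs - x‖ ^ 2 - 2 * ⟪xs - x, kacz Pj x - x⟫ + ‖kacz Pj x - x‖ ^ 2 :=
    norm_sub_sq_real _ _
  have hd : (xs - x) - (kacz Pj x - x) = xs - chainK Pj x p := by rw [hk]; abel
  rw [hd] at hpol
  linarith

end
end

section
/- Let x_0 ∈ ℝ^n, let x* be the unique point with A x* = b and x* ∈ x_0 + R(Aᵀ), and suppose x_1,…,x_K ∈ ℝ^n are generated recursively so that for each k < K one has P(x_k) ≠ x_k and x_{k+1} is the unique minimizer of ‖x − x*‖² over the affine hull aff(x_0,…,x_k,P(x_k)). Then for every k ∈ {0,…,K}: (a) x_k is the unique minimizer of ‖x − x*‖² over aff(x_0,…,x_k); (b) the affine hull aff(x_0,…,x_k) has dimension k; and (c) aff(x_0,…,x_k) = x_0 + K_k(C,r_0), where r_0 := g − C x_0. -/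
open scoped RealInnerProductSpace

noncomputable section

set_option maxHeartbeats 1000000 in
lemma nearest_eq {n m : ℕ} (A : Euc n →ₗ[ℝ] Euc m) (b : Euc m) (f : Euc n → Euc n)
    (hf : IsNearestPointMap {z | A z = b} f) (z0 : Euc n) (hz0 : A z0 = b) (x : Euc n) :
    f x = z0 + projSub (LinearMap.ker A) (x - z0) := by
  set Q := projSub (LinearMap.ker A) with hQ
  set w := z0 + Q (x - z0) with hw
  have hQmem : ∀ v : Euc n, Q v ∈ LinearMap.ker A := fun v => (Submodule.orthogonalProjection _ v).2
  have hwS : A w = b := by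
    have h0 : A (Q (x - z0)) = 0 := hQmem (x - z0)
    rw [hw, map_add, hz0, h0, add_zero]
  have hnear : ∀ y : Euc n, A y = b → ‖x - w‖ ≤ ‖x - y‖ := by
    intro y hy
    have hdec : x - y = (x - w) + (Q (x - z0) - (y - z0)) := by rw [hw]; abel
    have h1 : x - w ∈ (LinearMap.ker A)ᗮ := by
      have h : x - w = (x - z0) - Q (x - z0) := by rw [hw]; abel
      rw [h]; exact Submodule.sub_starProjection_mem_orthogonal _
    have h2 : Q (x - z0) - (y - z0) ∈ LinearMap.ker A := by
      refine Submodule.sub_mem _ (hQmem _) ?_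
      rw [LinearMap.mem_ker, map_sub, hy, hz0, sub_self]
    have horth : ⟪x - w, Q (x - z0) - (y - z0)⟫ = 0 :=
      Submodule.inner_left_of_mem_orthogonal h2 h1
    have hsq : ‖x - y‖^2 = ‖x - w‖^2 + ‖Q (x - z0) - (y - z0)‖^2 := by
      rw [hdec, norm_add_sq_real, horth]; ring
    nlinarith [norm_nonneg (x - y), norm_nonneg (x - w), sq_nonneg (‖Q (x - z0) - (y - z0)‖)]
  obtain ⟨hfS, hfmin⟩ := hf x
  have hd1 : dist x (f x) ≤ dist x w := hfmin w hwS
  have hdeq : ‖x - f x‖ = ‖x - w‖ := by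
    rw [dist_eq_norm, dist_eq_norm] at hd1
    exact le_antisymm hd1 (hnear _ hfS)
  set mpt := (2:ℝ)⁻¹ • (f x + w) with hm
  have hmS : A mpt = b := by
    rw [hm, map_smul, map_add, hfS, hwS]
    rw [show b = ((2:ℝ)⁻¹ + 2⁻¹) • b by norm_num]
    module
  have hdm : ‖x - w‖ ≤ ‖x - mpt‖ := hnear _ hmS
  have hpar := parallelogram_law_with_norm ℝ (x - f x) (x - w)
  have hsum : (x - f x) + (x - w) = (2:ℝ) • (x - mpt) := by rw [hm]; module
  have hnsum : ‖(x - f x) + (x - w)‖ = 2 * ‖x - mpt‖ := by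
    rw [hsum, norm_smul]; simp
  have hdiff : ‖(x - f x) - (x - w)‖ = 0 := by
    nlinarith [norm_nonneg ((x - f x) - (x - w)), norm_nonneg (x - mpt), norm_nonneg (x - w)]
  have hz : (x - f x) - (x - w) = 0 := norm_eq_zero.1 hdiff
  have h3 : x - f x = x - w := sub_eq_zero.1 hz
  have := congrArg (fun t => x - t) h3
  simpa using this

lemma projSub_pythagoras {n : ℕ} (K : Submodule ℝ (Euc n)) (v : Euc n) :
    ‖v‖^2 = ‖projSub K v‖^2 + ‖v - projSub K v‖^2 := by
  have h1 : projSub K v ∈ K := (K.orthogonalProjection v).2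
  have h2 : v - projSub K v ∈ Kᗮ := Submodule.sub_starProjection_mem_orthogonal _
  have horth : ⟪projSub K v, v - projSub K v⟫ = 0 :=
    Submodule.inner_right_of_mem_orthogonal h1 h2
  have hv : projSub K v + (v - projSub K v) = v := by abel
  conv_lhs => rw [← hv]
  rw [norm_add_sq_real, horth]
  ring

lemma projSub_norm_le {n : ℕ} (K : Submodule ℝ (Euc n)) (v : Euc n) :
    ‖projSub K v‖ ≤ ‖v‖ := by
  have := projSub_pythagoras K v
  nlinarith [norm_nonneg v, norm_nonneg (projSub K v), sq_nonneg ‖v - projSub K v‖]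

lemma projSub_norm_lt {n : ℕ} (K : Submodule ℝ (Euc n)) (v : Euc n)
    (h : projSub K v ≠ v) : ‖projSub K v‖ < ‖v‖ := by
  have hp := projSub_pythagoras K v
  have h0 : v - projSub K v ≠ 0 := fun hc => h (by rw [← sub_eq_zero]; rw [← neg_sub v]; simp [hc])
  have h1 : 0 < ‖v - projSub K v‖ := norm_pos_iff.2 h0
  nlinarith [norm_nonneg v, norm_nonneg (projSub K v)]

lemma Tchain_norm_le {n p : ℕ} (msz : Fin p → ℕ)
    (A : ∀ j : Fin p, Euc n →ₗ[ℝ] Euc (msz j)) (j : ℕ) (v : Euc n) :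
    ‖Tchain msz A j v‖ ≤ ‖v‖ ∧ (Tchain msz A j v ≠ v → ‖Tchain msz A j v‖ < ‖v‖) := by
  induction j with
  | zero => simp [Tchain]
  | succ j ih =>
    by_cases h : j < p
    · have he : Tchain msz A (j+1) v
          = projSub (LinearMap.ker (A ⟨j, h⟩)) (Tchain msz A j v) := by
        simp [Tchain, h]
      constructor
      · rw [he]; exact le_trans (projSub_norm_le _ _) ih.1
      · intro hne
        rw [he]
        rcases eq_or_ne (Tchain msz A j v) v with heq | hne2
        · rw [he] at hne
          rw [heq] at hne ⊢
          exact projSub_norm_lt _ _ hne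
        · exact lt_of_le_of_lt (projSub_norm_le _ _) (ih.2 hne2)
    · have he : Tchain msz A (j+1) v = Tchain msz A j v := by simp [Tchain, h]
      rw [he]; exact ih

lemma chainK_formula {n p : ℕ} (msz : Fin p → ℕ)
    (A : ∀ j : Fin p, Euc n →ₗ[ℝ] Euc (msz j)) (b : ∀ j : Fin p, Euc (msz j))
    (Pj : Fin p → Euc n → Euc n)
    (hPj : ∀ j : Fin p, IsNearestPointMap {z : Euc n | A j z = b j} (Pj j))
    (xs : Euc n) (hxs : ∀ j, A j xs = b j) (x : Euc n) (j : ℕ) :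
    chainK Pj x j = Tchain msz A j (x - xs) + xs := by
  induction j with
  | zero => simp [chainK, Tchain]
  | succ j ih =>
    by_cases h : j < p
    · have he : chainK Pj x (j+1) = Pj ⟨j, h⟩ (chainK Pj x j) := by simp [chainK, h]
      have hT : Tchain msz A (j+1) (x - xs)
          = projSub (LinearMap.ker (A ⟨j, h⟩)) (Tchain msz A j (x - xs)) := by
        simp [Tchain, h]
      rw [he, nearest_eq (A ⟨j, h⟩) (b ⟨j, h⟩) (Pj ⟨j, h⟩) (hPj _) xs (hxs _), ih, hT]
      rw [add_sub_cancel_right]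
      abel
    · have he : chainK Pj x (j+1) = chainK Pj x j := by simp [chainK, h]
      have hT : Tchain msz A (j+1) = Tchain msz A j := by simp [Tchain, h]
      rw [he, hT, ih]

lemma kacz_formula {n p : ℕ} (msz : Fin p → ℕ)
    (A : ∀ j : Fin p, Euc n →ₗ[ℝ] Euc (msz j)) (b : ∀ j : Fin p, Euc (msz j))
    (Pj : Fin p → Euc n → Euc n)
    (hPj : ∀ j : Fin p, IsNearestPointMap {z : Euc n | A j z = b j} (Pj j))
    (xs : Euc n) (hxs : ∀ j, A j xs = b j) (x : Euc n) :
    kacz Pj x = Tmap msz A (x - xs) + xs :=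
  chainK_formula msz A b Pj hPj xs hxs x p

lemma krylov_zero {n : ℕ} (C : Euc n →ₗ[ℝ] Euc n) (r : Euc n) :
    krylov C r 0 = ⊥ := by
  have : {v : Euc n | ∃ i < 0, v = (C ^ i) r} = ∅ := by
    ext v; simp
  rw [krylov, this, Submodule.span_empty]

lemma krylov_mono {n : ℕ} (C : Euc n →ₗ[ℝ] Euc n) (r : Euc n) {k l : ℕ} (h : k ≤ l) :
    krylov C r k ≤ krylov C r l := by
  apply Submodule.span_mono
  rintro v ⟨i, hi, rfl⟩
  exact ⟨i, lt_of_lt_of_le hi h, rfl⟩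

lemma r_mem_krylov {n : ℕ} (C : Euc n →ₗ[ℝ] Euc n) (r : Euc n) (k : ℕ) :
    r ∈ krylov C r (k + 1) :=
  Submodule.subset_span ⟨0, Nat.succ_pos k, by simp⟩

lemma C_mem_krylov {n : ℕ} (C : Euc n →ₗ[ℝ] Euc n) (r : Euc n) (k : ℕ) {v : Euc n}
    (hv : v ∈ krylov C r k) : C v ∈ krylov C r (k + 1) := by
  induction hv using Submodule.span_induction with
  | mem x hx =>
    obtain ⟨i, hi, rfl⟩ := hx
    exact Submodule.subset_span ⟨i + 1, by omega, by rw [pow_succ', Module.End.mul_apply]⟩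
  | zero => simp
  | add x y _ _ hx hy => rw [map_add]; exact Submodule.add_mem _ hx hy
  | smul a x _ hx => rw [map_smul]; exact Submodule.smul_mem _ _ hx

lemma krylov_succ {n : ℕ} (C : Euc n →ₗ[ℝ] Euc n) (r : Euc n) (k : ℕ) :
    krylov C r (k + 1) = krylov C r k ⊔ Submodule.span ℝ {(C ^ k) r} := by
  rw [krylov, krylov, ← Submodule.span_union]
  congr 1
  ext v
  constructor
  · rintro ⟨i, hi, rfl⟩
    rcases Nat.lt_or_ge i k with h | h
    · exact Or.inl ⟨i, h, rfl⟩
    · exact Or.inr (by rw [show i = k by omega]; rfl)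
  · rintro (⟨i, hi, rfl⟩ | h)
    · exact ⟨i, by omega, rfl⟩
    · exact ⟨k, by omega, h⟩

lemma krylov_finrank_le {n : ℕ} (C : Euc n →ₗ[ℝ] Euc n) (r : Euc n) (k : ℕ) :
    Module.finrank ℝ (krylov C r k) ≤ k := by
  induction k with
  | zero => rw [krylov_zero]; simp
  | succ k ih =>
    rw [krylov_succ]
    have h1 : Module.finrank ℝ ↥(krylov C r k ⊔ Submodule.span ℝ {(C ^ k) r})
        ≤ Module.finrank ℝ (krylov C r k) + Module.finrank ℝ (Submodule.span ℝ {(C ^ k) r}) := by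
      have := Submodule.finrank_sup_add_finrank_inf_eq (krylov C r k)
        (Submodule.span ℝ {(C ^ k) r})
      omega
    have h2 : Module.finrank ℝ (Submodule.span ℝ {(C ^ k) r}) ≤ 1 := by
      rcases eq_or_ne ((C ^ k) r) 0 with h | h
      · rw [h, Submodule.span_zero_singleton]; simp
      · rw [finrank_span_singleton h]
    omega

lemma affKrylov_eq_mk' {n : ℕ} (x0 : Euc n) (C : Euc n →ₗ[ℝ] Euc n) (r : Euc n) (k : ℕ) :
    affKrylov x0 C r k = (AffineSubspace.mk' x0 (krylov C r k) : Set (Euc n)) := by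
  ext q
  constructor
  · rintro ⟨v, hv, rfl⟩
    rw [SetLike.mem_coe, AffineSubspace.mem_mk']; simpa using hv
  · intro hq
    rw [SetLike.mem_coe, AffineSubspace.mem_mk'] at hq
    exact ⟨q -ᵥ x0, hq, by simp⟩

theorem stmt11
    {n p : ℕ} (msz : Fin p → ℕ)
    (A : ∀ j : Fin p, Euc n →ₗ[ℝ] Euc (msz j))
    (b : ∀ j : Fin p, Euc (msz j))
    (hcons : ∃ z : Euc n, ∀ j, A j z = b j)
    (Pj : Fin p → Euc n → Euc n)
    (hPj : ∀ j : Fin p, IsNearestPointMap {z : Euc n | A j z = b j} (Pj j))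
    (x0 xs : Euc n) (hxs : ∀ j, A j xs = b j) (hxs' : xs - x0 ∈ RAT msz A)
    (K : ℕ) (xseq : ℕ → Euc n) (h0 : xseq 0 = x0)
    (hstep : ∀ k < K, kacz Pj (xseq k) ≠ xseq k ∧
      IsUniqueMinimizer xs
        (affineSpan ℝ (insert (kacz Pj (xseq k)) (xseq '' Set.Iic k)) : Set (Euc n))
        (xseq (k + 1))) :
    ∀ k ≤ K,
      IsUniqueMinimizer xs (affineSpan ℝ (xseq '' Set.Iic k) : Set (Euc n)) (xseq k) ∧
      Module.finrank ℝ (affineSpan ℝ (xseq '' Set.Iic k)).direction = k ∧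
      (affineSpan ℝ (xseq '' Set.Iic k) : Set (Euc n)) =
        affKrylov x0 (Cmap msz A) (kacz Pj (0 : Euc n) - Cmap msz A x0) k := by
  set T := Tmap msz A with hT
  set C := Cmap msz A with hC
  set r := kacz Pj (0 : Euc n) - C x0 with hr
  have hkacz : ∀ x, kacz Pj x = T (x - xs) + xs := kacz_formula msz A b Pj hPj xs hxs
  have hCv : ∀ v, C v = v - T v := by
    intro v; rw [hC, Cmap, hT]; simp
  -- P x - x0 = (x - x0) - C (x - x0) + r
  have hPx0 : ∀ x, kacz Pj x - x0 = (x - x0) - C (x - x0) + r := by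
    intro x
    simp only [hr, hkacz, hCv, map_sub, map_zero]
    abel
  -- strict decrease
  have hdecr : ∀ x, kacz Pj x ≠ x → ‖kacz Pj x - xs‖^2 < ‖x - xs‖^2 := by
    intro x hne
    have h1 : kacz Pj x - xs = T (x - xs) := by rw [hkacz]; abel
    have h2 : T (x - xs) ≠ x - xs := by
      intro h; apply hne
      rw [hkacz, h]; abel
    have h3 : ‖T (x - xs)‖ < ‖x - xs‖ := (Tchain_norm_le msz A p (x - xs)).2 h2
    rw [h1]
    have h4 : (0:ℝ) ≤ ‖T (x - xs)‖ := norm_nonneg _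
    nlinarith
  -- main induction
  intro k hk
  induction k with
  | zero =>
    have him : xseq '' Set.Iic 0 = {x0} := by
      have : Set.Iic (0:ℕ) = {0} := by ext i; simp [Nat.le_zero]
      rw [this, Set.image_singleton, h0]
    have hspan : affineSpan ℝ (xseq '' Set.Iic 0) = AffineSubspace.mk' x0 (⊥ : Submodule ℝ (Euc n)) := by
      apply le_antisymm
      · rw [affineSpan_le, him]
        intro q hq
        rw [Set.mem_singleton_iff] at hq
        rw [hq]
        exact AffineSubspace.self_mem_mk' _ _
      · intro q hq
        rw [AffineSubspace.mem_mk'] at hq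
        have : q = x0 := by
          have h' : q - x0 = 0 := hq
          rw [sub_eq_zero] at h'; exact h'
        rw [this]
        exact mem_affineSpan ℝ (by rw [him]; rfl)
    refine ⟨?_, ?_, ?_⟩
    · constructor
      · rw [h0, hspan]; exact AffineSubspace.self_mem_mk' _ _
      · intro y hy hyne
        exfalso; apply hyne
        rw [hspan] at hy
        rw [SetLike.mem_coe, AffineSubspace.mem_mk'] at hy
        have h' : y - x0 = 0 := hy
        rw [sub_eq_zero] at h'
        rw [h', h0]
    · rw [hspan, AffineSubspace.direction_mk']; simp
    · rw [hspan, affKrylov_eq_mk', krylov_zero]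
  | succ k ih =>
    have hkK : k < K := hk
    have hkle : k ≤ K := le_of_lt hkK
    obtain ⟨ha, hb, hc⟩ := ih hkle
    obtain ⟨hne, hmin⟩ := hstep k hkK
    set Pk := kacz Pj (xseq k) with hPk
    set Sk := affineSpan ℝ (xseq '' Set.Iic k) with hSk
    set Big := affineSpan ℝ (insert Pk (xseq '' Set.Iic k)) with hBig
    -- S_k = mk' x0 (krylov k)
    have hcmk : Sk = AffineSubspace.mk' x0 (krylov C r k) := by
      apply SetLike.coe_injective
      rw [← affKrylov_eq_mk']
      exact hc
    have hdir : Sk.direction = krylov C r k := by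
      rw [hcmk, AffineSubspace.direction_mk']
    -- memberships
    have hxkS : xseq k ∈ Sk := mem_affineSpan ℝ ⟨k, Set.mem_Iic.2 le_rfl, rfl⟩
    have hxkBig : xseq k ∈ Big :=
      mem_affineSpan ℝ (Set.mem_insert_of_mem _ ⟨k, Set.mem_Iic.2 le_rfl, rfl⟩)
    have hPkBig : Pk ∈ Big := mem_affineSpan ℝ (Set.mem_insert _ _)
    have hdec : ‖Pk - xs‖^2 < ‖xseq k - xs‖^2 := hdecr _ hne
    -- x_{k+1} not in S_k
    have hnot : xseq (k+1) ∉ (Sk : Set (Euc n)) := by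
      intro hmem
      rcases eq_or_ne (xseq (k+1)) (xseq k) with heq | hne2
      · have h1 : ‖xseq (k+1) - xs‖^2 < ‖Pk - xs‖^2 :=
          hmin.2 Pk hPkBig (by rw [heq]; exact hne)
        rw [heq] at h1
        linarith
      · have h1 : ‖xseq k - xs‖^2 < ‖xseq (k+1) - xs‖^2 := ha.2 _ hmem hne2
        have h2 : ‖xseq (k+1) - xs‖^2 < ‖xseq k - xs‖^2 :=
          hmin.2 (xseq k) hxkBig (Ne.symm hne2)
        linarith
    -- image splits
    have himsucc : xseq '' Set.Iic (k+1) = insert (xseq (k+1)) (xseq '' Set.Iic k) := by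
      have : Set.Iic (k+1) = insert (k+1) (Set.Iic k) := by ext i; simp; omega
      rw [this, Set.image_insert_eq]
    set Sk1 := affineSpan ℝ (xseq '' Set.Iic (k+1)) with hSk1
    have hx1S1 : xseq (k+1) ∈ Sk1 :=
      mem_affineSpan ℝ ⟨k+1, Set.mem_Iic.2 le_rfl, rfl⟩
    -- Sk1 ≤ Big
    have hS1Big : Sk1 ≤ Big := by
      rw [hSk1, himsucc, affineSpan_le]
      intro q hq
      rcases hq with hq | hq
      · rw [hq]; exact hmin.1
      · exact subset_affineSpan ℝ _ (Set.mem_insert_of_mem _ hq)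
    -- (a)
    have haS1 : IsUniqueMinimizer xs (Sk1 : Set (Euc n)) (xseq (k+1)) :=
      ⟨hx1S1, fun y hy hyne => hmin.2 y (hS1Big hy) hyne⟩
    -- Big ≤ mk' x0 (krylov (k+1))
    have hBigle : Big ≤ AffineSubspace.mk' x0 (krylov C r (k+1)) := by
      rw [hBig, affineSpan_le]
      intro q hq
      rw [SetLike.mem_coe, AffineSubspace.mem_mk']
      rcases hq with hq | hq
      · -- q = Pk
        rw [hq]
        have hxk0 : xseq k - x0 ∈ krylov C r k := by
          have := hxkS
          rw [hcmk, AffineSubspace.mem_mk'] at this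
          exact this
        have h1 : Pk -ᵥ x0 = (xseq k - x0) - C (xseq k - x0) + r := hPx0 _
        rw [h1]
        refine Submodule.add_mem _ (Submodule.sub_mem _ ?_ ?_) (r_mem_krylov C r k)
        · exact krylov_mono C r (Nat.le_succ k) hxk0
        · exact C_mem_krylov C r k hxk0
      · -- q in previous points
        have hqS : q ∈ Sk := subset_affineSpan ℝ _ hq
        rw [hcmk] at hqS
        rw [AffineSubspace.mem_mk'] at hqS
        exact krylov_mono C r (Nat.le_succ k) hqS
    -- w := x_{k+1} - x0
    have hwmem : xseq (k+1) - x0 ∈ krylov C r (k+1) := by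
      have := hBigle (hS1Big hx1S1)
      rw [AffineSubspace.mem_mk'] at this
      exact this
    have hwnot : xseq (k+1) - x0 ∉ krylov C r k := by
      intro hmem
      apply hnot
      rw [hcmk]
      rw [SetLike.mem_coe, AffineSubspace.mem_mk']
      exact hmem
    -- Ksup
    set Ksup := krylov C r k ⊔ Submodule.span ℝ {xseq (k+1) - x0} with hKsup
    have hlt : krylov C r k < Ksup := by
      refine lt_of_le_of_ne le_sup_left ?_
      intro h
      apply hwnot
      rw [h]
      exact Submodule.mem_sup_right (Submodule.mem_span_singleton_self _)
    have hKsuple : Ksup ≤ krylov C r (k+1) := by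
      refine sup_le (krylov_mono C r (Nat.le_succ k)) ?_
      rw [Submodule.span_le, Set.singleton_subset_iff]
      exact hwmem
    have hrankk : Module.finrank ℝ (krylov C r k) = k := by
      rw [← hdir]; exact hb
    have hrank1 : k + 1 ≤ Module.finrank ℝ Ksup := by
      have := Submodule.finrank_lt_finrank_of_lt hlt
      rw [hrankk] at this
      omega
    have hKeq : Ksup = krylov C r (k+1) := by
      apply Submodule.eq_of_le_of_finrank_le hKsuple
      exact le_trans (krylov_finrank_le C r (k+1)) hrank1
    have hrankk1 : Module.finrank ℝ (krylov C r (k+1)) = k + 1 := by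
      have h1 := krylov_finrank_le C r (k+1)
      rw [← hKeq] at h1 ⊢
      omega
    -- mk' ≤ Sk1
    have hx0S1 : x0 ∈ Sk1 := by
      rw [← h0]
      exact mem_affineSpan ℝ ⟨0, Set.mem_Iic.2 (Nat.zero_le _), rfl⟩
    have hdirS1 : krylov C r (k+1) ≤ Sk1.direction := by
      rw [← hKeq]
      refine sup_le ?_ ?_
      · rw [← hdir]
        exact AffineSubspace.direction_le
          (affineSpan_mono ℝ (Set.image_mono (Set.Iic_subset_Iic.2 (Nat.le_succ k))))
      · rw [Submodule.span_le, Set.singleton_subset_iff]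
        exact AffineSubspace.vsub_mem_direction hx1S1 hx0S1
    have hmkle : AffineSubspace.mk' x0 (krylov C r (k+1)) ≤ Sk1 := by
      intro q hq
      rw [AffineSubspace.mem_mk'] at hq
      have : q = (q - x0) +ᵥ x0 := by simp
      rw [this]
      exact AffineSubspace.vadd_mem_of_mem_direction (hdirS1 hq) hx0S1
    have hSeq : Sk1 = AffineSubspace.mk' x0 (krylov C r (k+1)) :=
      le_antisymm (le_trans hS1Big hBigle) hmkle
    refine ⟨haS1, ?_, ?_⟩
    · rw [hSeq, AffineSubspace.direction_mk']
      exact hrankk1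
    · rw [hSeq, affKrylov_eq_mk']

end
end
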